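/- Let A be an invertible n×n matrix with |det A| > 1, Γ a full rank lattice, and W ⊂ ℝⁿ measurable. Suppose there exist ε > 0, a set U that tiles ℝⁿ by A-dilations, and infinitely many pairwise disjoint measurable subsets V_k ⊂ U each of measure at least ε, such that a_J := sup_k ∑_{j≥J} |V_k ∩ A^j(W)| → 0 as J → ∞. Then W does not simultaneously tile ℝⁿ by A-dilations and by Γ-translations (W is not an (A,Γ) wavelet set). -/

import Mathlib

open MeasureTheory
open scoped ENNReal

/-- General principle for non-existence of wavelet sets: if some dilation-tiling generator `U`
contains infinitely many disjoint sets `V k` of measure at least `ε` such that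
`a_J := sup_k ∑_{j ≥ J} |V k ∩ A^j(W)| → 0` as `J → ∞`, then `W` is not an `(A,Γ)` wavelet
set, i.e. `W` does not simultaneously tile by `A`-dilations and by `Γ`-translations. -/
theorem stmt10 (n : ℕ)
    (A : EuclideanSpace ℝ (Fin n) ≃ₗ[ℝ] EuclideanSpace ℝ (Fin n))
    (hdet : 1 < |LinearMap.det A.toLinearMap|)
    (L : EuclideanSpace ℝ (Fin n) ≃ₗ[ℝ] EuclideanSpace ℝ (Fin n))
    (Γ : Set (EuclideanSpace ℝ (Fin n)))
    (hΓ : Γ = Set.range fun k : Fin n → ℤ => L (WithLp.toLp 2 (fun i => (k i : ℝ))))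
    (W : Set (EuclideanSpace ℝ (Fin n))) (hW : MeasurableSet W)
    (ε : ℝ≥0∞) (hε : 0 < ε)
    (U : Set (EuclideanSpace ℝ (Fin n))) (hU : MeasurableSet U)
    (hUtile : ∀ᵐ x : EuclideanSpace ℝ (Fin n), ∃! j : ℤ, x ∈ (A ^ j) '' U)
    (V : ℕ → Set (EuclideanSpace ℝ (Fin n)))
    (hVmeas : ∀ k, MeasurableSet (V k))
    (hVsub : ∀ k, V k ⊆ U)
    (hVdisj : Pairwise (Function.onFun Disjoint V))
    (hVε : ∀ k, ε ≤ volume (V k))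
    (ha : Filter.Tendsto
      (fun J : ℕ => ⨆ k : ℕ, ∑' j : ℕ, volume (V k ∩ (A ^ ((J : ℤ) + j)) '' W))
      Filter.atTop (nhds 0)) :
    ¬ ((∀ᵐ x : EuclideanSpace ℝ (Fin n), ∃! j : ℤ, x ∈ (A ^ j) '' W) ∧
       (∀ᵐ x : EuclideanSpace ℝ (Fin n), ∃! γ, γ ∈ Γ ∧ x + γ ∈ W)) := by
  rintro ⟨hdil, htr⟩
  classical
  -- Step 1: `W` has finite measure, being a fundamental domain for the lattice `Γ`.
  set b : Module.Basis (Fin n) ℝ (EuclideanSpace ℝ (Fin n)) :=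
    ((EuclideanSpace.basisFun (Fin n) ℝ).toBasis).map L with hb
  have hrepr : ∀ (x : EuclideanSpace ℝ (Fin n)) (i : Fin n), b.repr x i = L.symm x i := by
    intro x i
    simp [hb]
  have hmemΓ : ∀ x, x ∈ Γ ↔ x ∈ Submodule.span ℤ (Set.range b) := by
    intro x
    rw [hΓ]
    constructor
    · rintro ⟨k, rfl⟩
      rw [Module.Basis.mem_span_iff_repr_mem]
      intro i
      refine ⟨k i, ?_⟩
      rw [hrepr, LinearEquiv.symm_apply_apply]
      simp
    · intro hx
      rw [Module.Basis.mem_span_iff_repr_mem] at hx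
      choose k hk using hx
      refine ⟨k, ?_⟩
      have hx' : WithLp.toLp 2 (fun i => (k i : ℝ)) = L.symm x := by
        ext i
        have := hk i
        rw [hrepr] at this
        simpa using this
      show L (WithLp.toLp 2 (fun i => (k i : ℝ))) = x
      rw [hx']
      exact L.apply_symm_apply x
  set G : AddSubgroup (EuclideanSpace ℝ (Fin n)) :=
    (Submodule.span ℤ (Set.range b)).toAddSubgroup with hG
  haveI : Countable G := inferInstanceAs (Countable (Submodule.span ℤ (Set.range b)))
  haveI : VAddInvariantMeasure G (EuclideanSpace ℝ (Fin n)) volume :=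
    ⟨fun c s _ => measure_preimage_add _ _ _⟩
  have hNull : volume {x : EuclideanSpace ℝ (Fin n) | ¬ ∃! γ, γ ∈ Γ ∧ x + γ ∈ W} = 0 :=
    ae_iff.1 htr
  have fdW : IsAddFundamentalDomain G W volume := by
    refine ⟨hW.nullMeasurableSet, ?_, ?_⟩
    · filter_upwards [htr] with x hx
      obtain ⟨γ, ⟨hγ, hγW⟩, -⟩ := hx
      refine ⟨⟨γ, Submodule.mem_toAddSubgroup _ |>.2 ((hmemΓ γ).1 hγ)⟩, ?_⟩
      show γ + x ∈ W
      rwa [add_comm]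
    · intro g₁ g₂ hne
      refine measure_mono_null ?_ hNull
      rintro x ⟨hx₁, hx₂⟩
      obtain ⟨w₁, hw₁, hxw₁⟩ := hx₁
      obtain ⟨w₂, hw₂, hxw₂⟩ := hx₂
      have hxw₁' : (g₁ : EuclideanSpace ℝ (Fin n)) + w₁ = x := hxw₁
      have hxw₂' : (g₂ : EuclideanSpace ℝ (Fin n)) + w₂ = x := hxw₂
      simp only [Set.mem_setOf_eq]
      rintro ⟨γ₀, -, hu⟩
      have h₁ : x + (-(g₁ : EuclideanSpace ℝ (Fin n))) ∈ W := by
        have : x + (-(g₁ : EuclideanSpace ℝ (Fin n))) = w₁ := by rw [← hxw₁']; abel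
        rwa [this]
      have h₂ : x + (-(g₂ : EuclideanSpace ℝ (Fin n))) ∈ W := by
        have : x + (-(g₂ : EuclideanSpace ℝ (Fin n))) = w₂ := by rw [← hxw₂']; abel
        rwa [this]
      have m₁ : -(g₁ : EuclideanSpace ℝ (Fin n)) ∈ Γ :=
        (hmemΓ _).2 (Submodule.mem_toAddSubgroup _ |>.1 (neg_mem g₁.2))
      have m₂ : -(g₂ : EuclideanSpace ℝ (Fin n)) ∈ Γ :=
        (hmemΓ _).2 (Submodule.mem_toAddSubgroup _ |>.1 (neg_mem g₂.2))
      have e₁ := hu _ ⟨m₁, h₁⟩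
      have e₂ := hu _ ⟨m₂, h₂⟩
      exact hne (Subtype.ext (neg_injective (e₁.trans e₂.symm)))
  have hWfin : volume W < ⊤ := by
    rw [fdW.measure_eq (ZSpan.isAddFundamentalDomain' b volume)]
    exact (ZSpan.fundamentalDomain_isBounded b).measure_lt_top
  -- Step 2: basic facts about the dilation images of `W`.
  have hmeasim : ∀ z : ℤ, MeasurableSet ((A ^ z) '' W) := by
    intro z
    rw [LinearEquiv.image_eq_preimage_symm]
    have hc : Continuous ((A ^ z).symm : EuclideanSpace ℝ (Fin n) → EuclideanSpace ℝ (Fin n)) :=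
      LinearMap.continuous_of_finiteDimensional ((A ^ z).symm.toLinearMap)
    exact hW.preimage hc.measurable
  have hdetpos : (0 : ℝ) < |LinearMap.det A.toLinearMap| := lt_trans one_pos hdet
  set d : ℝ≥0∞ := ENNReal.ofReal |LinearMap.det A.toLinearMap| with hd
  have hd1 : 1 < d := by
    rw [hd, ← ENNReal.ofReal_one]
    exact (ENNReal.ofReal_lt_ofReal_iff hdetpos).2 hdet
  have hd0 : d ≠ 0 := (lt_trans zero_lt_one hd1).ne'
  have hdtop : d ≠ ⊤ := ENNReal.ofReal_ne_top
  have himg : ∀ (z : ℤ) (s : Set (EuclideanSpace ℝ (Fin n))),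
      volume ((A : EuclideanSpace ℝ (Fin n) ≃ₗ[ℝ] EuclideanSpace ℝ (Fin n)) '' s)
        = d * volume s := by
    intro z s
    have h := MeasureTheory.Measure.addHaar_image_linearMap volume A.toLinearMap s
    rwa [LinearEquiv.coe_toLinearMap] at h
  have hstep : ∀ z : ℤ,
      volume ((A ^ (z - 1)) '' W) = d⁻¹ * volume ((A ^ z) '' W) := by
    intro z
    have hmul : A ^ z = A ^ (1 : ℤ) * A ^ (z - 1) := by
      rw [← zpow_add]
      congr 1
      ring
    have hz : (A ^ z) '' W = A '' ((A ^ (z - 1)) '' W) := by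
      rw [hmul, zpow_one, ← Set.image_comp]
      rfl
    rw [hz, himg z, ← mul_assoc, ENNReal.inv_mul_cancel hd0 hdtop, one_mul]
  have himgfin : ∀ z : ℤ, volume ((A ^ z) '' W) < ⊤ := by
    intro z
    have h := MeasureTheory.Measure.addHaar_image_linearMap volume (A ^ z).toLinearMap W
    rw [LinearEquiv.coe_toLinearMap] at h
    rw [h]
    exact ENNReal.mul_lt_top ENNReal.ofReal_lt_top hWfin
  -- Step 3: choose `δ` and `J`.
  obtain ⟨δ, hδ0, hδtop, hδε⟩ : ∃ δ : ℝ≥0∞, 0 < δ ∧ δ ≠ ⊤ ∧ δ + δ ≤ ε := by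
    refine ⟨min ε 1 / 2, ?_, ?_, ?_⟩
    · exact ENNReal.div_pos (lt_min hε zero_lt_one).ne' (by norm_num)
    · exact (ENNReal.div_lt_top (by simp [ne_top_of_le_ne_top ENNReal.one_ne_top (min_le_right ε 1)])
        (by norm_num)).ne
    · calc min ε 1 / 2 + min ε 1 / 2 = min ε 1 := ENNReal.add_halves _
        _ ≤ ε := min_le_left _ _
  obtain ⟨J, hJ⟩ := (ha.eventually_lt_const hδ0).exists
  set S : Set (EuclideanSpace ℝ (Fin n)) := ⋃ m : ℕ, (A ^ ((J : ℤ) - 1 - m)) '' W with hS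
  set T : Set (EuclideanSpace ℝ (Fin n)) := ⋃ i : ℕ, (A ^ ((J : ℤ) + i)) '' W with hT
  have hSmeas : MeasurableSet S := MeasurableSet.iUnion fun m => hmeasim _
  have hTmeas : MeasurableSet T := MeasurableSet.iUnion fun i => hmeasim _
  -- a.e. every point is in `S ∪ T`
  have hcov : ∀ᵐ x : EuclideanSpace ℝ (Fin n), x ∈ S ∪ T := by
    filter_upwards [hdil] with x hx
    obtain ⟨j, hj, -⟩ := hx
    rcases le_or_gt (J : ℤ) j with h | h
    · right
      refine Set.mem_iUnion.2 ⟨(j - J).toNat, ?_⟩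
      have : (J : ℤ) + ((j - (J : ℤ)).toNat : ℤ) = j := by
        rw [Int.toNat_of_nonneg (by omega)]; ring
      rw [this]
      exact hj
    · left
      refine Set.mem_iUnion.2 ⟨((J : ℤ) - 1 - j).toNat, ?_⟩
      have : (J : ℤ) - 1 - (((J : ℤ) - 1 - j).toNat : ℤ) = j := by
        rw [Int.toNat_of_nonneg (by omega)]; ring
      rw [this]
      exact hj
  -- each `V k` meets `S` in measure at least `δ`
  have hVS : ∀ k, δ ≤ volume (V k ∩ S) := by
    intro k
    have h0 : volume (V k \ (S ∪ T)) = 0 :=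
      measure_mono_null (fun x hx => hx.2) (ae_iff.1 hcov)
    have h1 : volume (V k) ≤ volume (V k ∩ S) + volume (V k ∩ T) := by
      calc volume (V k) = volume (V k ∩ (S ∪ T)) + volume (V k \ (S ∪ T)) :=
            (measure_inter_add_diff _ (hSmeas.union hTmeas)).symm
        _ = volume (V k ∩ (S ∪ T)) := by rw [h0, add_zero]
        _ = volume ((V k ∩ S) ∪ (V k ∩ T)) := by rw [Set.inter_union_distrib_left]
        _ ≤ volume (V k ∩ S) + volume (V k ∩ T) := measure_union_le _ _
    have h2 : volume (V k ∩ T) ≤ δ := by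
      calc volume (V k ∩ T) ≤ ∑' i : ℕ, volume (V k ∩ (A ^ ((J : ℤ) + i)) '' W) := by
            rw [hT, Set.inter_iUnion]
            exact measure_iUnion_le _
        _ ≤ ⨆ k : ℕ, ∑' i : ℕ, volume (V k ∩ (A ^ ((J : ℤ) + i)) '' W) :=
            le_iSup (fun k => ∑' i : ℕ, volume (V k ∩ (A ^ ((J : ℤ) + i)) '' W)) k
        _ ≤ δ := hJ.le
    have h3 : ε ≤ volume (V k ∩ S) + δ :=
      le_trans (hVε k) (le_trans h1 (add_le_add le_rfl h2))
    have h4 : δ ≤ ε - δ := ENNReal.le_sub_of_add_le_left hδtop hδε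
    exact le_trans h4 (tsub_le_iff_right.2 h3)
  -- `S` has finite measure
  have hSfin : volume S < ⊤ := by
    have hiter : ∀ m : ℕ, volume ((A ^ ((J : ℤ) - 1 - m)) '' W)
        = d⁻¹ ^ m * volume ((A ^ ((J : ℤ) - 1)) '' W) := by
      intro m
      induction m with
      | zero => simp
      | succ p ih =>
        have he : ((J : ℤ) - 1 - ((p + 1 : ℕ) : ℤ)) = ((J : ℤ) - 1 - p) - 1 := by
          push_cast; ring
        rw [he, hstep, ih, ← mul_assoc, ← pow_succ']
    calc volume S ≤ ∑' m : ℕ, volume ((A ^ ((J : ℤ) - 1 - m)) '' W) := measure_iUnion_le _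
      _ = ∑' m : ℕ, d⁻¹ ^ m * volume ((A ^ ((J : ℤ) - 1)) '' W) := by
          exact tsum_congr fun m => hiter m
      _ = (∑' m : ℕ, d⁻¹ ^ m) * volume ((A ^ ((J : ℤ) - 1)) '' W) := ENNReal.tsum_mul_right
      _ < ⊤ := by
          refine ENNReal.mul_lt_top ?_ (himgfin _)
          rw [ENNReal.tsum_geometric]
          exact ENNReal.inv_lt_top.2 (tsub_pos_of_lt (ENNReal.inv_lt_one.2 hd1))
  -- counting: infinitely many disjoint pieces of measure `δ` inside `S`
  have hcount : ∀ N : ℕ, (N : ℝ≥0∞) * δ ≤ volume S := by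
    intro N
    have hdisj : (↑(Finset.range N) : Set ℕ).PairwiseDisjoint fun k => V k ∩ S :=
      fun i _ j _ hij =>
        Disjoint.mono Set.inter_subset_left Set.inter_subset_left (hVdisj hij)
    calc (N : ℝ≥0∞) * δ = ∑ _k ∈ Finset.range N, δ := by
          simp [Finset.sum_const, nsmul_eq_mul]
      _ ≤ ∑ k ∈ Finset.range N, volume (V k ∩ S) := Finset.sum_le_sum fun k _ => hVS k
      _ = volume (⋃ k ∈ Finset.range N, V k ∩ S) :=
          (measure_biUnion_finset hdisj fun k _ => (hVmeas k).inter hSmeas).symm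
      _ ≤ volume S := measure_mono (Set.iUnion₂_subset fun k _ => Set.inter_subset_right)
  obtain ⟨N, hN⟩ := ENNReal.exists_nat_mul_gt hδ0.ne' hSfin.ne
  exact absurd (hcount N) (not_le.2 hN)
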